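/- Let H be a 4-dimensional real vector space, Q a 2-dimensional real vector space, and L : H × H → Q an alternating ℝ-bilinear map such that for every nonzero linear functional ψ ∈ Q* the 4-form (ψ∘L) ∧ (ψ∘L) ∈ Λ⁴H* is nonzero. Then there exist complex structures J : H → H and J_Q : Q → Q (ℝ-linear maps with J ∘ J = −id and J_Q ∘ J_Q = −id) such that L(Jx, y) = J_Q(L(x,y)) for all x, y ∈ H; moreover, the pairs with this property are exactly (J, J_Q) and (−J, −J_Q), i.e. the pair is unique up to simultaneously replacing both maps by their negatives. -/

import Mathlib

/-- The wedge product of two alternating bilinear forms on a real vector space,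
evaluated on four vectors via the (2,2)-shuffle formula. -/
def wedge22 {V : Type*} (ω η : V → V → ℝ) (x y z w : V) : ℝ :=
  ω x y * η z w - ω x z * η y w + ω x w * η y z
    + ω y z * η x w - ω y w * η x z + ω z w * η x y

section Aux
open Matrix

/-- A generic real skew-symmetric 4×4 matrix. -/
def skm (a b c d e f : ℝ) : Matrix (Fin 4) (Fin 4) ℝ :=
  !![0,a,b,c; -a,0,d,e; -b,-d,0,f; -c,-e,-f,0]

/-- The "Pfaffian adjugate" of `skm a b c d e f`. -/
def tld (a b c d e f : ℝ) : Matrix (Fin 4) (Fin 4) ℝ := skm (-f) e (-d) (-c) b (-a)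

set_option maxHeartbeats 1000000 in
theorem skm_mul_tld (a b c d e f : ℝ) :
    skm a b c d e f * tld a b c d e f = (a*f - b*e + c*d) • 1 := by
  ext i j
  fin_cases i <;> fin_cases j <;>
    simp [skm, tld, Matrix.mul_apply, Fin.sum_univ_four, Matrix.one_apply] <;> ring

set_option maxHeartbeats 1000000 in
theorem tld_mul_skm (a b c d e f : ℝ) :
    tld a b c d e f * skm a b c d e f = (a*f - b*e + c*d) • 1 := by
  ext i j
  fin_cases i <;> fin_cases j <;>
    simp [skm, tld, Matrix.mul_apply, Fin.sum_univ_four, Matrix.one_apply] <;> ring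

set_option maxHeartbeats 2000000 in
theorem skm_mul_tld_bil (a₁ b₁ c₁ d₁ e₁ f₁ a₂ b₂ c₂ d₂ e₂ f₂ : ℝ) :
    skm a₁ b₁ c₁ d₁ e₁ f₁ * tld a₂ b₂ c₂ d₂ e₂ f₂
      + skm a₂ b₂ c₂ d₂ e₂ f₂ * tld a₁ b₁ c₁ d₁ e₁ f₁
    = (a₁*f₂ + a₂*f₁ - b₁*e₂ - b₂*e₁ + c₁*d₂ + c₂*d₁) • 1 := by
  ext i j
  fin_cases i <;> fin_cases j <;>
    simp [skm, tld, Matrix.mul_apply, Fin.sum_univ_four, Matrix.one_apply,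
      Matrix.add_apply] <;> ring

set_option maxHeartbeats 2000000 in
theorem tld_mul_skm_bil (a₁ b₁ c₁ d₁ e₁ f₁ a₂ b₂ c₂ d₂ e₂ f₂ : ℝ) :
    tld a₁ b₁ c₁ d₁ e₁ f₁ * skm a₂ b₂ c₂ d₂ e₂ f₂
      + tld a₂ b₂ c₂ d₂ e₂ f₂ * skm a₁ b₁ c₁ d₁ e₁ f₁
    = (a₁*f₂ + a₂*f₁ - b₁*e₂ - b₂*e₁ + c₁*d₂ + c₂*d₁) • 1 := by
  ext i j
  fin_cases i <;> fin_cases j <;>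
    simp [skm, tld, Matrix.mul_apply, Fin.sum_univ_four, Matrix.one_apply,
      Matrix.add_apply] <;> ring

theorem skm_transpose (a b c d e f : ℝ) :
    (skm a b c d e f)ᵀ = -skm a b c d e f := by
  ext i j
  fin_cases i <;> fin_cases j <;> simp [skm]

theorem tld_transpose (a b c d e f : ℝ) :
    (tld a b c d e f)ᵀ = -tld a b c d e f := skm_transpose _ _ _ _ _ _

theorem coreJ (A B C D E F A' B' C' D' E' F' p : ℝ) (hp : p ≠ 0)
    (h1 : A*F - B*E + C*D = p) (h2 : A'*F' - B'*E' + C'*D' = p)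
    (hmx : A*F' + A'*F - B*E' - B'*E + C*D' + C'*D = 0) :
    (p⁻¹ • (tld A B C D E F * skm A' B' C' D' E' F')) *
        (p⁻¹ • (tld A B C D E F * skm A' B' C' D' E' F')) = -1 ∧
    (p⁻¹ • (tld A B C D E F * skm A' B' C' D' E' F'))ᵀ * skm A B C D E F
        = skm A' B' C' D' E' F' ∧
    (p⁻¹ • (tld A B C D E F * skm A' B' C' D' E' F'))ᵀ * skm A' B' C' D' E' F'
        = -skm A B C D E F := by
  have hT1S1 : tld A B C D E F * skm A B C D E F = p • 1 := by rw [tld_mul_skm, h1]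
  have hS1T1 : skm A B C D E F * tld A B C D E F = p • 1 := by rw [skm_mul_tld, h1]
  have hT2S2 : tld A' B' C' D' E' F' * skm A' B' C' D' E' F' = p • 1 := by rw [tld_mul_skm, h2]
  have hS2T2 : skm A' B' C' D' E' F' * tld A' B' C' D' E' F' = p • 1 := by rw [skm_mul_tld, h2]
  set S1 := skm A B C D E F
  set S2 := skm A' B' C' D' E' F'
  set T1 := tld A B C D E F
  set T2 := tld A' B' C' D' E' F'
  have hbS : S1 * T2 + S2 * T1 = 0 := by
    have h := skm_mul_tld_bil A B C D E F A' B' C' D' E' F'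
    rw [hmx, zero_smul] at h
    exact h
  have hbT : T1 * S2 + T2 * S1 = 0 := by
    have h := tld_mul_skm_bil A B C D E F A' B' C' D' E' F'
    rw [hmx, zero_smul] at h
    exact h
  have hb1 : S2 * T1 = -(S1 * T2) := by
    rw [add_comm] at hbS; exact eq_neg_of_add_eq_zero_left hbS
  have hb2 : T1 * S2 = -(T2 * S1) := eq_neg_of_add_eq_zero_left hbT
  have htr : (p⁻¹ • (T1 * S2))ᵀ = p⁻¹ • (S2 * T1) := by
    rw [Matrix.transpose_smul, Matrix.transpose_mul]
    have hs2 : S2ᵀ = -S2 := skm_transpose _ _ _ _ _ _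
    have ht1 : T1ᵀ = -T1 := tld_transpose _ _ _ _ _ _
    rw [hs2, ht1, Matrix.neg_mul, Matrix.mul_neg, neg_neg]
  refine ⟨?_, ?_, ?_⟩
  · calc (p⁻¹ • (T1 * S2)) * (p⁻¹ • (T1 * S2))
        = (p⁻¹ * p⁻¹) • (T1 * (S2 * (T1 * S2))) := by
          rw [Matrix.smul_mul, Matrix.mul_smul, smul_smul, Matrix.mul_assoc T1 S2 (T1 * S2)]
      _ = (p⁻¹ * p⁻¹) • (T1 * ((S2 * T1) * S2)) := by rw [Matrix.mul_assoc S2 T1 S2]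
      _ = (p⁻¹ * p⁻¹) • (-(T1 * ((S1 * T2) * S2))) := by
          rw [hb1, Matrix.neg_mul, Matrix.mul_neg]
      _ = (p⁻¹ * p⁻¹) • (-((T1 * S1) * (T2 * S2))) := by
          rw [Matrix.mul_assoc S1 T2 S2, ← Matrix.mul_assoc T1 S1 (T2 * S2)]
      _ = -1 := by
          rw [hT1S1, hT2S2, Matrix.smul_mul, Matrix.mul_smul, one_mul, smul_neg, smul_smul,
            smul_smul, show p⁻¹ * p⁻¹ * p * p = 1 by field_simp, one_smul]
  · rw [htr, Matrix.smul_mul, Matrix.mul_assoc, hT1S1, Matrix.mul_smul, mul_one, smul_smul,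
      inv_mul_cancel₀ hp, one_smul]
  · rw [htr, Matrix.smul_mul, Matrix.mul_assoc, hb2, Matrix.mul_neg, ← Matrix.mul_assoc S2 T2 S1,
      hS2T2, Matrix.smul_mul, one_mul, smul_neg, smul_smul, inv_mul_cancel₀ hp, one_smul]

theorem reduceA (A B C D E F A' B' C' D' E' F' p a b : ℝ)
    (M : Matrix (Fin 4) (Fin 4) ℝ) (hp : p ≠ 0)
    (h1 : A*F - B*E + C*D = p)
    (hN : Mᵀ * skm A B C D E F = a • skm A B C D E F + b • skm A' B' C' D' E' F') :
    M = a • 1 + b • (p⁻¹ • (tld A B C D E F * skm A' B' C' D' E' F')) := by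
  have hT1S1 : tld A B C D E F * skm A B C D E F = p • 1 := by rw [tld_mul_skm, h1]
  have h' := congrArg Matrix.transpose hN
  rw [Matrix.transpose_mul, Matrix.transpose_transpose, Matrix.transpose_add,
    Matrix.transpose_smul, Matrix.transpose_smul, skm_transpose, skm_transpose,
    Matrix.neg_mul, smul_neg, smul_neg, ← neg_add] at h'
  have h'' : skm A B C D E F * M
      = a • skm A B C D E F + b • skm A' B' C' D' E' F' := neg_inj.mp h'
  have h3 := congrArg (fun X => tld A B C D E F * X) h''
  simp only [Matrix.mul_add, Matrix.mul_smul, ← Matrix.mul_assoc] at h3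
  rw [hT1S1, Matrix.smul_mul, one_mul] at h3
  -- h3 : p • M = a • (p • 1) + b • (tld * skm')
  have h4 : p • M = p • (a • 1 + b • (p⁻¹ • (tld A B C D E F * skm A' B' C' D' E' F'))) := by
    rw [h3, smul_add, smul_smul, smul_smul, smul_smul, smul_smul,
      show p * a = a * p by ring, show p * b * p⁻¹ = b by field_simp]
  exact smul_right_injective _ hp h4

theorem reduceB (A B C D E F A' B' C' D' E' F' p c d : ℝ)
    (M : Matrix (Fin 4) (Fin 4) ℝ) (hp : p ≠ 0)
    (h2 : A'*F' - B'*E' + C'*D' = p)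
    (hmx : A*F' + A'*F - B*E' - B'*E + C*D' + C'*D = 0)
    (hN : Mᵀ * skm A' B' C' D' E' F' = c • skm A B C D E F + d • skm A' B' C' D' E' F') :
    M = d • 1 - c • (p⁻¹ • (tld A B C D E F * skm A' B' C' D' E' F')) := by
  have hT2S2 : tld A' B' C' D' E' F' * skm A' B' C' D' E' F' = p • 1 := by rw [tld_mul_skm, h2]
  have hbT : tld A' B' C' D' E' F' * skm A B C D E F
      = -(tld A B C D E F * skm A' B' C' D' E' F') := by
    have h := tld_mul_skm_bil A B C D E F A' B' C' D' E' F'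
    rw [hmx, zero_smul] at h
    rw [add_comm] at h
    exact eq_neg_of_add_eq_zero_left h
  have h' := congrArg Matrix.transpose hN
  rw [Matrix.transpose_mul, Matrix.transpose_transpose, Matrix.transpose_add,
    Matrix.transpose_smul, Matrix.transpose_smul, skm_transpose, skm_transpose,
    Matrix.neg_mul, smul_neg, smul_neg, ← neg_add] at h'
  have h'' : skm A' B' C' D' E' F' * M
      = c • skm A B C D E F + d • skm A' B' C' D' E' F' := neg_inj.mp h'
  have h3 := congrArg (fun X => tld A' B' C' D' E' F' * X) h''
  simp only [Matrix.mul_add, Matrix.mul_smul, ← Matrix.mul_assoc] at h3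
  rw [hT2S2, hbT, Matrix.smul_mul, one_mul] at h3
  -- h3 : p • M = c • -(tld * skm') + d • (p • 1)
  have h4 : p • M = p • (d • 1 - c • (p⁻¹ • (tld A B C D E F * skm A' B' C' D' E' F'))) := by
    rw [h3, smul_sub, smul_smul, smul_smul, smul_smul, smul_smul,
      show p * d = d * p by ring, show p * c * p⁻¹ = c by field_simp, smul_neg]
    abel
  exact smul_right_injective _ hp h4

end Aux
set_option maxHeartbeats 1600000000 in
set_option synthInstance.maxHeartbeats 2000000 in
/-- **Pointwise core of Theorem 1 (elliptic case).** Let `L : H × H → Q` be an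
alternating bilinear map, `dim H = 4`, `dim Q = 2`, such that for every nonzero
`ψ ∈ Q*` the 4-form `(ψ∘L) ∧ (ψ∘L)` is nonzero (ellipticity). Then there are
complex structures `J` on `H` and `JQ` on `Q` making `L` complex bilinear, i.e.
`L(Jx,y) = JQ(L(x,y))`, and the pairs with these properties are exactly
`(J, JQ)` and `(-J, -JQ)`. -/
theorem stmt4 (H Q : Type*) [AddCommGroup H] [Module ℝ H] [FiniteDimensional ℝ H]
    [AddCommGroup Q] [Module ℝ Q] [FiniteDimensional ℝ Q]
    (hH : Module.finrank ℝ H = 4) (hQ : Module.finrank ℝ Q = 2)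
    (L : H →ₗ[ℝ] H →ₗ[ℝ] Q) (halt : ∀ x : H, L x x = 0)
    (hell : ∀ ψ : Module.Dual ℝ Q, ψ ≠ 0 →
      ∃ x y z w : H,
        wedge22 (fun a b => ψ (L a b)) (fun a b => ψ (L a b)) x y z w ≠ 0) :
    ∃ J : H →ₗ[ℝ] H, ∃ JQ : Q →ₗ[ℝ] Q,
      J ∘ₗ J = -LinearMap.id ∧ JQ ∘ₗ JQ = -LinearMap.id ∧
      (∀ x y : H, L (J x) y = JQ (L x y)) ∧
      (∀ (J' : H →ₗ[ℝ] H) (JQ' : Q →ₗ[ℝ] Q),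
        J' ∘ₗ J' = -LinearMap.id → JQ' ∘ₗ JQ' = -LinearMap.id →
        (∀ x y : H, L (J' x) y = JQ' (L x y)) →
        (J' = J ∧ JQ' = JQ) ∨ (J' = -J ∧ JQ' = -JQ)) := by
  classical
  obtain ⟨e⟩ : Nonempty (Module.Basis (Fin 4) ℝ H) := ⟨Module.finBasisOfFinrankEq ℝ H hH⟩
  obtain ⟨f⟩ : Nonempty (Module.Basis (Fin 2) ℝ Q) := ⟨Module.finBasisOfFinrankEq ℝ Q hQ⟩
  -- skew-symmetry of L
  have hskew : ∀ u v : H, L u v = -L v u := by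
    intro u v
    have h := halt (u + v)
    simp only [map_add, LinearMap.add_apply, halt, zero_add, add_zero] at h
    rw [add_comm] at h
    exact eq_neg_of_add_eq_zero_left h
  have hsk10 : L (e 1) (e 0) = -L (e 0) (e 1) := hskew _ _
  have hsk20 : L (e 2) (e 0) = -L (e 0) (e 2) := hskew _ _
  have hsk30 : L (e 3) (e 0) = -L (e 0) (e 3) := hskew _ _
  have hsk21 : L (e 2) (e 1) = -L (e 1) (e 2) := hskew _ _
  have hsk31 : L (e 3) (e 1) = -L (e 1) (e 3) := hskew _ _
  have hsk32 : L (e 3) (e 2) = -L (e 2) (e 3) := hskew _ _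
  -- coordinate expansion of ψ (L x y)
  have hexp : ∀ (ψ : Module.Dual ℝ Q) (x y : H), ψ (L x y) = (e.repr x 0 * e.repr y 1 - e.repr x 1 * e.repr y 0) * ψ (L (e 0) (e 1)) + (e.repr x 0 * e.repr y 2 - e.repr x 2 * e.repr y 0) * ψ (L (e 0) (e 2)) + (e.repr x 0 * e.repr y 3 - e.repr x 3 * e.repr y 0) * ψ (L (e 0) (e 3)) + (e.repr x 1 * e.repr y 2 - e.repr x 2 * e.repr y 1) * ψ (L (e 1) (e 2)) + (e.repr x 1 * e.repr y 3 - e.repr x 3 * e.repr y 1) * ψ (L (e 1) (e 3)) + (e.repr x 2 * e.repr y 3 - e.repr x 3 * e.repr y 2) * ψ (L (e 2) (e 3)) := by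
    intro ψ x y
    conv_lhs => rw [← Module.Basis.sum_repr e x, ← Module.Basis.sum_repr e y]
    simp only [Fin.sum_univ_four, map_add, map_sum, map_smul, LinearMap.add_apply,
      LinearMap.sum_apply, LinearMap.smul_apply, smul_eq_mul, halt, hsk10, hsk20, hsk30, hsk21, hsk31, hsk32, map_neg, map_zero,
      mul_zero, mul_neg, zero_add, add_zero]
    ring
  -- ellipticity: the Pfaffian-type quadratic form never vanishes
  have hPne : ∀ ψ : Module.Dual ℝ Q, ψ ≠ 0 → ψ (L (e 0) (e 1)) * ψ (L (e 2) (e 3)) - ψ (L (e 0) (e 2)) * ψ (L (e 1) (e 3)) + ψ (L (e 0) (e 3)) * ψ (L (e 1) (e 2)) ≠ 0 := by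
    intro ψ hψ hc
    obtain ⟨x, y, z, w, hw⟩ := hell ψ hψ
    apply hw
    simp only [wedge22]
    rw [hexp ψ x y, hexp ψ x z, hexp ψ x w, hexp ψ y z, hexp ψ y w, hexp ψ z w]
    linear_combination (2*(e.repr x 0*e.repr y 1*e.repr z 2*e.repr w 3 - e.repr x 0*e.repr y 1*e.repr z 3*e.repr w 2 - e.repr x 0*e.repr y 2*e.repr z 1*e.repr w 3 + e.repr x 0*e.repr y 2*e.repr z 3*e.repr w 1 + e.repr x 0*e.repr y 3*e.repr z 1*e.repr w 2 - e.repr x 0*e.repr y 3*e.repr z 2*e.repr w 1 - e.repr x 1*e.repr y 0*e.repr z 2*e.repr w 3 + e.repr x 1*e.repr y 0*e.repr z 3*e.repr w 2 + e.repr x 1*e.repr y 2*e.repr z 0*e.repr w 3 - e.repr x 1*e.repr y 2*e.repr z 3*e.repr w 0 - e.repr x 1*e.repr y 3*e.repr z 0*e.repr w 2 + e.repr x 1*e.repr y 3*e.repr z 2*e.repr w 0 + e.repr x 2*e.repr y 0*e.repr z 1*e.repr w 3 - e.repr x 2*e.repr y 0*e.repr z 3*e.repr w 1 - e.repr x 2*e.repr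 y 1*e.repr z 0*e.repr w 3 + e.repr x 2*e.repr y 1*e.repr z 3*e.repr w 0 + e.repr x 2*e.repr y 3*e.repr z 0*e.repr w 1 - e.repr x 2*e.repr y 3*e.repr z 1*e.repr w 0 - e.repr x 3*e.repr y 0*e.repr z 1*e.repr w 2 + e.repr x 3*e.repr y 0*e.repr z 2*e.repr w 1 + e.repr x 3*e.repr y 1*e.repr z 0*e.repr w 2 - e.repr x 3*e.repr y 1*e.repr z 2*e.repr w 0 - e.repr x 3*e.repr y 2*e.repr z 0*e.repr w 1 + e.repr x 3*e.repr y 2*e.repr z 1*e.repr w 0)) * hc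
  -- the two coordinate functionals on Q
  set ε0 : Module.Dual ℝ Q := f.coord 0 with hε0def
  set ε1 : Module.Dual ℝ Q := f.coord 1 with hε1def
  have hε0f0 : ε0 (f 0) = 1 := by rw [hε0def]; simp [Module.Basis.coord_apply]
  have hε0f1 : ε0 (f 1) = 0 := by rw [hε0def]; simp [Module.Basis.coord_apply]
  have hε1f0 : ε1 (f 0) = 0 := by rw [hε1def]; simp [Module.Basis.coord_apply]
  have hε1f1 : ε1 (f 1) = 1 := by rw [hε1def]; simp [Module.Basis.coord_apply]
  have hε0ne : ε0 ≠ 0 := by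
    intro h; rw [h] at hε0f0; simp at hε0f0
  have hε1ne : ε1 ≠ 0 := by
    intro h; rw [h] at hε1f1; simp at hε1f1
  have hα : (ε0 (L (e 0) (e 1)) * ε0 (L (e 2) (e 3)) - ε0 (L (e 0) (e 2)) * ε0 (L (e 1) (e 3)) + ε0 (L (e 0) (e 3)) * ε0 (L (e 1) (e 2))) ≠ 0 := hPne ε0 hε0ne
  -- definiteness of the quadratic form
  have hdisc : 0 < 4*(ε0 (L (e 0) (e 1)) * ε0 (L (e 2) (e 3)) - ε0 (L (e 0) (e 2)) * ε0 (L (e 1) (e 3)) + ε0 (L (e 0) (e 3)) * ε0 (L (e 1) (e 2)))*(ε1 (L (e 0) (e 1)) * ε1 (L (e 2) (e 3)) - ε1 (L (e 0) (e 2)) * ε1 (L (e 1) (e 3)) + ε1 (L (e 0) (e 3)) * ε1 (L (e 1) (e 2))) - (ε0 (L (e 0) (e 1)) * ε1 (L (e 2) (e 3)) + ε1 (L (e 0) (e 1)) * ε0 (L (e 2) (e 3)) - ε0 (L (e 0) (e 2)) * ε1 (L (e 1) (e 3)) - ε1 (L (e 0) (e 2)) * ε0 (L (e 1) (e 3)) +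 ε0 (L (e 0) (e 3)) * ε1 (L (e 1) (e 2)) + ε1 (L (e 0) (e 3)) * ε0 (L (e 1) (e 2)))^2 := by
    by_contra hge
    push_neg at hge
    have hge' : 0 ≤ (ε0 (L (e 0) (e 1)) * ε1 (L (e 2) (e 3)) + ε1 (L (e 0) (e 1)) * ε0 (L (e 2) (e 3)) - ε0 (L (e 0) (e 2)) * ε1 (L (e 1) (e 3)) - ε1 (L (e 0) (e 2)) * ε0 (L (e 1) (e 3)) + ε0 (L (e 0) (e 3)) * ε1 (L (e 1) (e 2)) + ε1 (L (e 0) (e 3)) * ε0 (L (e 1) (e 2)))^2 - 4*(ε0 (L (e 0) (e 1)) * ε0 (L (e 2) (e 3)) - ε0 (L (e 0) (e 2)) * ε0 (L (e 1) (e 3)) + ε0 (L (e 0) (e 3)) * ε0 (L (e 1) (e 2)))*(ε1 (L (e 0) (e 1)) * ε1 (L (e 2) (e 3)) - ε1 (L (e 0) (e 2)) * ε1 (L (e 1) (e 3)) + ε1 (L (e 0) (e 3)) * ε1 (L (e 1) (e 2))) := by linarith only [hge]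
    have hR : Real.sqrt ((ε0 (L (e 0) (e 1)) * ε1 (L (e 2) (e 3)) + ε1 (L (e 0) (e 1)) * ε0 (L (e 2) (e 3)) - ε0 (L (e 0) (e 2)) * ε1 (L (e 1) (e 3)) - ε1 (L (e 0) (e 2)) * ε0 (L (e 1) (e 3)) + ε0 (L (e 0) (e 3)) * ε1 (L (e 1) (e 2)) + ε1 (L (e 0) (e 3)) * ε0 (L (e 1) (e 2)))^2 - 4*(ε0 (L (e 0) (e 1)) * ε0 (L (e 2) (e 3)) - ε0 (L (e 0) (e 2)) * ε0 (L (e 1) (e 3)) + ε0 (L (e 0) (e 3)) * ε0 (L (e 1) (e 2)))*(ε1 (L (e 0) (e 1)) * ε1 (L (e 2) (e 3)) - ε1 (L (e 0) (e 2)) * ε1 (L (e 1) (e 3)) + ε1 (L (e 0) (e 3)) * ε1 (L (e 1) (e 2))))^2 = (ε0 (L (e 0) (e 1)) * ε1 (L (e 2) (e 3)) + ε1 (L (e 0) (e 1)) * ε0 (L (e 2) (e 3)) - ε0 (L (e 0) (e 2)) * ε1 (L (e 1) (e 3)) - ε1 (L (e 0) (e 2)) * ε0 (L (e 1) (e 3))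 + ε0 (L (e 0) (e 3)) * ε1 (L (e 1) (e 2)) + ε1 (L (e 0) (e 3)) * ε0 (L (e 1) (e 2)))^2 - 4*(ε0 (L (e 0) (e 1)) * ε0 (L (e 2) (e 3)) - ε0 (L (e 0) (e 2)) * ε0 (L (e 1) (e 3)) + ε0 (L (e 0) (e 3)) * ε0 (L (e 1) (e 2)))*(ε1 (L (e 0) (e 1)) * ε1 (L (e 2) (e 3)) - ε1 (L (e 0) (e 2)) * ε1 (L (e 1) (e 3)) + ε1 (L (e 0) (e 3)) * ε1 (L (e 1) (e 2))) :=
      Real.sq_sqrt hge'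
    have h2P0 : (2*(ε0 (L (e 0) (e 1)) * ε0 (L (e 2) (e 3)) - ε0 (L (e 0) (e 2)) * ε0 (L (e 1) (e 3)) + ε0 (L (e 0) (e 3)) * ε0 (L (e 1) (e 2)))) ≠ 0 := mul_ne_zero two_ne_zero hα
    have hne : (-(ε0 (L (e 0) (e 1)) * ε1 (L (e 2) (e 3)) + ε1 (L (e 0) (e 1)) * ε0 (L (e 2) (e 3)) - ε0 (L (e 0) (e 2)) * ε1 (L (e 1) (e 3)) - ε1 (L (e 0) (e 2)) * ε0 (L (e 1) (e 3)) + ε0 (L (e 0) (e 3)) * ε1 (L (e 1) (e 2)) + ε1 (L (e 0) (e 3)) * ε0 (L (e 1) (e 2))) + Real.sqrt ((ε0 (L (e 0) (e 1)) * ε1 (L (e 2) (e 3)) + ε1 (L (e 0) (e 1)) * ε0 (L (e 2) (e 3)) - ε0 (L (e 0) (e 2)) * ε1 (L (e 1) (e 3)) - ε1 (L (e 0) (e 2)) * ε0 (L (e 1) (e 3)) + ε0 (L (e 0) (e 3)) * ε1 (L (e 1) (e 2)) + ε1 (L (e 0) (e 3)) * ε0 (L (e 1) (e 2)))^2 - 4*(ε0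 (L (e 0) (e 1)) * ε0 (L (e 2) (e 3)) - ε0 (L (e 0) (e 2)) * ε0 (L (e 1) (e 3)) + ε0 (L (e 0) (e 3)) * ε0 (L (e 1) (e 2)))*(ε1 (L (e 0) (e 1)) * ε1 (L (e 2) (e 3)) - ε1 (L (e 0) (e 2)) * ε1 (L (e 1) (e 3)) + ε1 (L (e 0) (e 3)) * ε1 (L (e 1) (e 2))))) • ε0 + (2*(ε0 (L (e 0) (e 1)) * ε0 (L (e 2) (e 3)) - ε0 (L (e 0) (e 2)) * ε0 (L (e 1) (e 3)) + ε0 (L (e 0) (e 3)) * ε0 (L (e 1) (e 2)))) • ε1 ≠ 0 := by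
      intro h
      have h' := congrArg (fun φ : Module.Dual ℝ Q => φ (f 1)) h
      simp only [LinearMap.add_apply, LinearMap.smul_apply, smul_eq_mul, hε0f1, hε1f1,
        LinearMap.zero_apply, mul_zero, mul_one, zero_add] at h'
      exact h2P0 h'
    refine hPne _ hne ?_
    simp only [LinearMap.add_apply, LinearMap.smul_apply, smul_eq_mul]
    linear_combination (ε0 (L (e 0) (e 1)) * ε0 (L (e 2) (e 3)) - ε0 (L (e 0) (e 2)) * ε0 (L (e 1) (e 3)) + ε0 (L (e 0) (e 3)) * ε0 (L (e 1) (e 2))) * hR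
  have hsqpos : 0 < Real.sqrt (4*(ε0 (L (e 0) (e 1)) * ε0 (L (e 2) (e 3)) - ε0 (L (e 0) (e 2)) * ε0 (L (e 1) (e 3)) + ε0 (L (e 0) (e 3)) * ε0 (L (e 1) (e 2)))*(ε1 (L (e 0) (e 1)) * ε1 (L (e 2) (e 3)) - ε1 (L (e 0) (e 2)) * ε1 (L (e 1) (e 3)) + ε1 (L (e 0) (e 3)) * ε1 (L (e 1) (e 2))) - (ε0 (L (e 0) (e 1)) * ε1 (L (e 2) (e 3)) + ε1 (L (e 0) (e 1)) * ε0 (L (e 2) (e 3)) - ε0 (L (e 0) (e 2)) * ε1 (L (e 1) (e 3)) - ε1 (L (e 0) (e 2)) * ε0 (L (e 1) (e 3)) + ε0 (L (e 0) (e 3)) * ε1 (L (e 1) (e 2)) + ε1 (L (e 0) (e 3)) * ε0 (L (e 1) (e 2)))^2) := Real.sqrt_pos.mpr hdisc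
  set k : ℝ := (Real.sqrt (4*(ε0 (L (e 0) (e 1)) * ε0 (L (e 2) (e 3)) - ε0 (L (e 0) (e 2)) * ε0 (L (e 1) (e 3)) + ε0 (L (e 0) (e 3)) * ε0 (L (e 1) (e 2)))*(ε1 (L (e 0) (e 1)) * ε1 (L (e 2) (e 3)) - ε1 (L (e 0) (e 2)) * ε1 (L (e 1) (e 3)) + ε1 (L (e 0) (e 3)) * ε1 (L (e 1) (e 2))) - (ε0 (L (e 0) (e 1)) * ε1 (L (e 2) (e 3)) + ε1 (L (e 0) (e 1)) * ε0 (L (e 2) (e 3)) - ε0 (L (e 0) (e 2)) * ε1 (L (e 1) (e 3)) - ε1 (L (e 0) (e 2)) * ε0 (L (e 1) (e 3)) + ε0 (L (e 0) (e 3)) * ε1 (L (e 1) (e 2)) + ε1 (L (e 0) (e 3)) * ε0 (L (e 1) (e 2)))^2))⁻¹ with hkdef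
  have hkne : k ≠ 0 := by rw [hkdef]; exact inv_ne_zero (ne_of_gt hsqpos)
  have hk : k^2 * (4*(ε0 (L (e 0) (e 1)) * ε0 (L (e 2) (e 3)) - ε0 (L (e 0) (e 2)) * ε0 (L (e 1) (e 3)) + ε0 (L (e 0) (e 3)) * ε0 (L (e 1) (e 2)))*(ε1 (L (e 0) (e 1)) * ε1 (L (e 2) (e 3)) - ε1 (L (e 0) (e 2)) * ε1 (L (e 1) (e 3)) + ε1 (L (e 0) (e 3)) * ε1 (L (e 1) (e 2))) - (ε0 (L (e 0) (e 1)) * ε1 (L (e 2) (e 3)) + ε1 (L (e 0) (e 1)) * ε0 (L (e 2) (e 3)) - ε0 (L (e 0) (e 2)) * ε1 (L (e 1) (e 3)) - ε1 (L (e 0) (e 2)) * ε0 (L (e 1) (e 3)) + ε0 (L (e 0) (e 3)) * ε1 (L (e 1) (e 2)) + ε1 (L (e 0) (e 3)) * ε0 (L (e 1) (e 2)))^2) = 1 := by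
    rw [hkdef, inv_pow, Real.sq_sqrt hdisc.le]
    exact inv_mul_cancel₀ (ne_of_gt hdisc)
  -- the second functional
  set ψ₂ : Module.Dual ℝ Q := (-(ε0 (L (e 0) (e 1)) * ε1 (L (e 2) (e 3)) + ε1 (L (e 0) (e 1)) * ε0 (L (e 2) (e 3)) - ε0 (L (e 0) (e 2)) * ε1 (L (e 1) (e 3)) - ε1 (L (e 0) (e 2)) * ε0 (L (e 1) (e 3)) + ε0 (L (e 0) (e 3)) * ε1 (L (e 1) (e 2)) + ε1 (L (e 0) (e 3)) * ε0 (L (e 1) (e 2)))*k) • ε0 + (2*(ε0 (L (e 0) (e 1)) * ε0 (L (e 2) (e 3)) - ε0 (L (e 0) (e 2)) * ε0 (L (e 1) (e 3)) + ε0 (L (e 0) (e 3)) * ε0 (L (e 1) (e 2)))*k) • ε1 with hψ₂def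
  have hψ₂v : ∀ v : Q, ψ₂ v = (-(ε0 (L (e 0) (e 1)) * ε1 (L (e 2) (e 3)) + ε1 (L (e 0) (e 1)) * ε0 (L (e 2) (e 3)) - ε0 (L (e 0) (e 2)) * ε1 (L (e 1) (e 3)) - ε1 (L (e 0) (e 2)) * ε0 (L (e 1) (e 3)) + ε0 (L (e 0) (e 3)) * ε1 (L (e 1) (e 2)) + ε1 (L (e 0) (e 3)) * ε0 (L (e 1) (e 2)))*k) * ε0 v + (2*(ε0 (L (e 0) (e 1)) * ε0 (L (e 2) (e 3)) - ε0 (L (e 0) (e 2)) * ε0 (L (e 1) (e 3)) + ε0 (L (e 0) (e 3)) * ε0 (L (e 1) (e 2)))*k) * ε1 v := by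
    intro v; rw [hψ₂def]; simp [LinearMap.add_apply, LinearMap.smul_apply]
  have hψ₂f0 : ψ₂ (f 0) = -(ε0 (L (e 0) (e 1)) * ε1 (L (e 2) (e 3)) + ε1 (L (e 0) (e 1)) * ε0 (L (e 2) (e 3)) - ε0 (L (e 0) (e 2)) * ε1 (L (e 1) (e 3)) - ε1 (L (e 0) (e 2)) * ε0 (L (e 1) (e 3)) + ε0 (L (e 0) (e 3)) * ε1 (L (e 1) (e 2)) + ε1 (L (e 0) (e 3)) * ε0 (L (e 1) (e 2)))*k := by rw [hψ₂v, hε0f0, hε1f0]; ring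
  have hψ₂f1 : ψ₂ (f 1) = 2*(ε0 (L (e 0) (e 1)) * ε0 (L (e 2) (e 3)) - ε0 (L (e 0) (e 2)) * ε0 (L (e 1) (e 3)) + ε0 (L (e 0) (e 3)) * ε0 (L (e 1) (e 2)))*k := by rw [hψ₂v, hε0f1, hε1f1]; ring
  have hTne : ψ₂ (f 1) ≠ 0 := by
    rw [hψ₂f1]; exact mul_ne_zero (mul_ne_zero two_ne_zero hα) hkne
  -- the dual pair in Q
  set g0 : Q := f 0 - (ψ₂ (f 0) * (ψ₂ (f 1))⁻¹) • f 1 with hg0def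
  set g1 : Q := (ψ₂ (f 1))⁻¹ • f 1 with hg1def
  have hg00 : ε0 g0 = 1 := by
    rw [hg0def, map_sub, map_smul, hε0f0, hε0f1, smul_eq_mul, mul_zero, sub_zero]
  have hg01 : ψ₂ g0 = 0 := by
    rw [hg0def, map_sub, map_smul, smul_eq_mul]
    field_simp
    simp
  have hg10 : ε0 g1 = 0 := by
    rw [hg1def, map_smul, hε0f1, smul_eq_mul, mul_zero]
  have hg11 : ψ₂ g1 = 1 := by
    rw [hg1def, map_smul, smul_eq_mul]
    field_simp
  -- every vector of Q is reconstructed from ε0, ψ₂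
  have hrepr : ∀ v : Q, ε0 v • g0 + ψ₂ v • g1 = v := by
    intro v
    have hv : v = f.repr v 0 • f 0 + f.repr v 1 • f 1 := by
      have := Module.Basis.sum_repr f v
      rw [Fin.sum_univ_two] at this
      exact this.symm
    conv_lhs => rw [hv]
    conv_rhs => rw [hv]
    simp only [map_add, map_smul, smul_eq_mul, hε0f0, hε0f1, hg0def, hg1def, mul_zero, mul_one,
      add_zero]
    match_scalars
    · ring
    · field_simp
      ring
  -- Pfaffian relations for ψ₂
  have hpf2 : ψ₂ (L (e 0) (e 1)) * ψ₂ (L (e 2) (e 3)) - ψ₂ (L (e 0) (e 2)) * ψ₂ (L (e 1) (e 3)) + ψ₂ (L (e 0) (e 3)) * ψ₂ (L (e 1) (e 2)) = (ε0 (L (e 0) (e 1)) * ε0 (L (e 2) (e 3)) - ε0 (L (e 0) (e 2)) * ε0 (L (e 1) (e 3)) + ε0 (L (e 0) (e 3)) * ε0 (L (e 1) (e 2))) := by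
    simp only [hψ₂v]
    linear_combination (ε0 (L (e 0) (e 1)) * ε0 (L (e 2) (e 3)) - ε0 (L (e 0) (e 2)) * ε0 (L (e 1) (e 3)) + ε0 (L (e 0) (e 3)) * ε0 (L (e 1) (e 2))) * hk
  have hmx12 : ε0 (L (e 0) (e 1)) * ψ₂ (L (e 2) (e 3)) + ψ₂ (L (e 0) (e 1)) * ε0 (L (e 2) (e 3)) - ε0 (L (e 0) (e 2)) * ψ₂ (L (e 1) (e 3)) - ψ₂ (L (e 0) (e 2)) * ε0 (L (e 1) (e 3)) + ε0 (L (e 0) (e 3)) * ψ₂ (L (e 1) (e 2)) + ψ₂ (L (e 0) (e 3)) * ε0 (L (e 1) (e 2)) = 0 := by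
    simp only [hψ₂v]
    ring
  -- abbreviate the twelve structure constants
  set aa1 := ε0 (L (e 0) (e 1)) with haa1
  set bb1 := ε0 (L (e 0) (e 2)) with hbb1
  set cc1 := ε0 (L (e 0) (e 3)) with hcc1
  set dd1 := ε0 (L (e 1) (e 2)) with hdd1
  set ee1 := ε0 (L (e 1) (e 3)) with hee1
  set ff1 := ε0 (L (e 2) (e 3)) with hff1
  set aa2 := ψ₂ (L (e 0) (e 1)) with haa2
  set bb2 := ψ₂ (L (e 0) (e 2)) with hbb2
  set cc2 := ψ₂ (L (e 0) (e 3)) with hcc2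
  set dd2 := ψ₂ (L (e 1) (e 2)) with hdd2
  set ee2 := ψ₂ (L (e 1) (e 3)) with hee2
  set ff2 := ψ₂ (L (e 2) (e 3)) with hff2
  obtain ⟨hM3, hM1, hM2⟩ := coreJ aa1 bb1 cc1 dd1 ee1 ff1 aa2 bb2 cc2 dd2 ee2 ff2
    (aa1*ff1 - bb1*ee1 + cc1*dd1) hα rfl hpf2 hmx12
  set Jm : Matrix (Fin 4) (Fin 4) ℝ :=
    (aa1*ff1 - bb1*ee1 + cc1*dd1)⁻¹ •
      (tld aa1 bb1 cc1 dd1 ee1 ff1 * skm aa2 bb2 cc2 dd2 ee2 ff2) with hJmdef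
  -- matrices of values agree with the skew matrices
  have hOM1 : Matrix.of (fun i j => ε0 (L (e i) (e j))) = skm aa1 bb1 cc1 dd1 ee1 ff1 := by
    ext i j
    fin_cases i <;> fin_cases j <;>
      simp [skm, Matrix.of_apply, halt, map_zero, hsk10, hsk20, hsk30, hsk21, hsk31, hsk32,
        map_neg, haa1, hbb1, hcc1, hdd1, hee1, hff1]
  have hOM2 : Matrix.of (fun i j => ψ₂ (L (e i) (e j))) = skm aa2 bb2 cc2 dd2 ee2 ff2 := by
    ext i j
    fin_cases i <;> fin_cases j <;>
      simp [skm, Matrix.of_apply, halt, map_zero, hsk10, hsk20, hsk30, hsk21, hsk31, hsk32,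
        map_neg, haa2, hbb2, hcc2, hdd2, hee2, hff2]
  -- the complex structures
  set JH : H →ₗ[ℝ] H := Matrix.toLin e e Jm with hJHdef
  have hJH2 : JH ∘ₗ JH = -LinearMap.id := by
    rw [hJHdef, ← Matrix.toLin_mul e e e Jm Jm, hM3]
    simp only [map_neg, Matrix.toLin_one]
  set JQ : Q →ₗ[ℝ] Q := LinearMap.smulRight ψ₂ g0 - LinearMap.smulRight ε0 g1 with hJQdef
  have hJQv : ∀ v : Q, JQ v = ψ₂ v • g0 - ε0 v • g1 := by
    intro v; rw [hJQdef]; simp [LinearMap.sub_apply, LinearMap.smulRight_apply]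
  have hJQ2 : JQ ∘ₗ JQ = -LinearMap.id := by
    apply LinearMap.ext; intro v
    simp only [LinearMap.comp_apply, LinearMap.neg_apply, LinearMap.id_apply]
    rw [hJQv (JQ v), hJQv v]
    simp only [map_sub, map_smul, hg00, hg01, hg10, hg11, smul_eq_mul]
    conv_rhs => rw [← hrepr v]
    match_scalars <;> ring
  -- the compatibility relation
  have hM1' : Matrix.transpose Jm * Matrix.of (fun i j => ε0 (L (e i) (e j)))
      = Matrix.of (fun i j => ψ₂ (L (e i) (e j))) := by rw [hOM1, hOM2]; exact hM1
  have hM2' : Matrix.transpose Jm * Matrix.of (fun i j => ψ₂ (L (e i) (e j)))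
      = -Matrix.of (fun i j => ε0 (L (e i) (e j))) := by rw [hOM1, hOM2]; exact hM2
  have key1 : ∀ i j, ε0 (L (JH (e i)) (e j)) = ψ₂ (L (e i) (e j)) := by
    intro i j
    have h := congrFun (congrFun hM1' i) j
    rw [Matrix.mul_apply] at h
    simp only [Matrix.transpose_apply, Matrix.of_apply] at h
    rw [hJHdef, Matrix.toLin_self]
    simp only [map_sum, map_smul, LinearMap.sum_apply, LinearMap.smul_apply, smul_eq_mul]
    exact h
  have key2 : ∀ i j, ψ₂ (L (JH (e i)) (e j)) = -ε0 (L (e i) (e j)) := by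
    intro i j
    have h := congrFun (congrFun hM2' i) j
    rw [Matrix.mul_apply] at h
    simp only [Matrix.transpose_apply, Matrix.of_apply, Matrix.neg_apply] at h
    rw [hJHdef, Matrix.toLin_self]
    simp only [map_sum, map_smul, LinearMap.sum_apply, LinearMap.smul_apply, smul_eq_mul]
    exact h
  have R1' : (LinearMap.compr₂ L ε0).comp JH = LinearMap.compr₂ L ψ₂ := by
    apply Module.Basis.ext e; intro i
    apply Module.Basis.ext e; intro j
    simp only [LinearMap.comp_apply, LinearMap.compr₂_apply]
    exact key1 i j
  have R2' : (LinearMap.compr₂ L ψ₂).comp JH = -LinearMap.compr₂ L ε0 := by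
    apply Module.Basis.ext e; intro i
    apply Module.Basis.ext e; intro j
    simp only [LinearMap.comp_apply, LinearMap.compr₂_apply, LinearMap.neg_apply]
    exact key2 i j
  have R1 : ∀ x y : H, ε0 (L (JH x) y) = ψ₂ (L x y) := by
    intro x y
    have := LinearMap.congr_fun (LinearMap.congr_fun R1' x) y
    simpa [LinearMap.comp_apply, LinearMap.compr₂_apply] using this
  have R2 : ∀ x y : H, ψ₂ (L (JH x) y) = -ε0 (L x y) := by
    intro x y
    have := LinearMap.congr_fun (LinearMap.congr_fun R2' x) y
    simpa [LinearMap.comp_apply, LinearMap.compr₂_apply, LinearMap.neg_apply] using this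
  have hrel : ∀ x y : H, L (JH x) y = JQ (L x y) := by
    intro x y
    have h3 := hrepr (L (JH x) y)
    rw [R1 x y, R2 x y] at h3
    rw [← h3, hJQv]
    rw [neg_smul, ← sub_eq_add_neg]
  refine ⟨JH, JQ, hJH2, hJQ2, hrel, ?_⟩
  -- uniqueness
  intro J' JQ' hJ'2 hJQ'2 hrel'
  set M' : Matrix (Fin 4) (Fin 4) ℝ := LinearMap.toMatrix e e J' with hM'def
  have hJ'lin : J' = Matrix.toLin e e M' := by rw [hM'def, Matrix.toLin_toMatrix]
  have hJ'b : ∀ i, J' (e i) = ∑ k, M' k i • e k := by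
    intro i; rw [hJ'lin]; simp
  have hJ'm3 : M' * M' = -1 := by
    rw [hM'def, ← LinearMap.toMatrix_comp e e e J' J', hJ'2]
    simp only [map_neg, LinearMap.toMatrix_id]
  set aS := ε0 (JQ' g0) with haSdef
  set bS := ε0 (JQ' g1) with hbSdef
  set cS := ψ₂ (JQ' g0) with hcSdef
  set dS := ψ₂ (JQ' g1) with hdSdef
  have h1' : ∀ v : Q, ε0 (JQ' v) = aS * ε0 v + bS * ψ₂ v := by
    intro v
    conv_lhs => rw [← hrepr v]
    rw [map_add, map_smul, map_smul, map_add, map_smul, map_smul]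
    rw [← haSdef, ← hbSdef]
    simp only [smul_eq_mul]
    ring
  have h2' : ∀ v : Q, ψ₂ (JQ' v) = cS * ε0 v + dS * ψ₂ v := by
    intro v
    conv_lhs => rw [← hrepr v]
    rw [map_add, map_smul, map_smul, map_add, map_smul, map_smul]
    rw [← hcSdef, ← hdSdef]
    simp only [smul_eq_mul]
    ring
  have hcmp : ∀ v : Q, JQ' (JQ' v) = -v := by
    intro v
    have := LinearMap.congr_fun hJQ'2 v
    simpa [LinearMap.comp_apply, LinearMap.neg_apply, LinearMap.id_apply] using this
  have q1 : aS * aS + bS * cS = -1 := by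
    have h := congrArg ε0 (hcmp g0)
    rw [h1' (JQ' g0), map_neg, hg00, ← haSdef, ← hcSdef] at h
    exact h
  have q2 : aS * bS + bS * dS = 0 := by
    have h := congrArg ε0 (hcmp g1)
    rw [h1' (JQ' g1), map_neg, hg10, neg_zero, ← hbSdef, ← hdSdef] at h
    exact h
  have q4 : cS * bS + dS * dS = -1 := by
    have h := congrArg ψ₂ (hcmp g1)
    rw [h2' (JQ' g1), map_neg, hg11, ← hbSdef, ← hdSdef] at h
    exact h
  have hN1 : Matrix.transpose M' * skm aa1 bb1 cc1 dd1 ee1 ff1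
      = aS • skm aa1 bb1 cc1 dd1 ee1 ff1 + bS • skm aa2 bb2 cc2 dd2 ee2 ff2 := by
    rw [← hOM1, ← hOM2]
    ext i j
    rw [Matrix.mul_apply]
    simp only [Matrix.transpose_apply, Matrix.of_apply, Matrix.add_apply, Matrix.smul_apply,
      smul_eq_mul]
    have hL : ∑ k, M' k i * ε0 (L (e k) (e j)) = ε0 (L (J' (e i)) (e j)) := by
      rw [hJ'b i]
      simp only [map_sum, map_smul, LinearMap.sum_apply, LinearMap.smul_apply, smul_eq_mul]
    rw [hL, hrel' (e i) (e j), h1' (L (e i) (e j))]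
  have hN2 : Matrix.transpose M' * skm aa2 bb2 cc2 dd2 ee2 ff2
      = cS • skm aa1 bb1 cc1 dd1 ee1 ff1 + dS • skm aa2 bb2 cc2 dd2 ee2 ff2 := by
    rw [← hOM1, ← hOM2]
    ext i j
    rw [Matrix.mul_apply]
    simp only [Matrix.transpose_apply, Matrix.of_apply, Matrix.add_apply, Matrix.smul_apply,
      smul_eq_mul]
    have hL : ∑ k, M' k i * ψ₂ (L (e k) (e j)) = ψ₂ (L (J' (e i)) (e j)) := by
      rw [hJ'b i]
      simp only [map_sum, map_smul, LinearMap.sum_apply, LinearMap.smul_apply, smul_eq_mul]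
    rw [hL, hrel' (e i) (e j), h2' (L (e i) (e j))]
  have hU1 : M' = aS • 1 + bS • Jm := by
    have h := reduceA aa1 bb1 cc1 dd1 ee1 ff1 aa2 bb2 cc2 dd2 ee2 ff2
      (aa1*ff1 - bb1*ee1 + cc1*dd1) aS bS M' hα rfl hN1
    rw [← hJmdef] at h
    exact h
  have hU2 : M' = dS • 1 - cS • Jm := by
    have h := reduceB aa1 bb1 cc1 dd1 ee1 ff1 aa2 bb2 cc2 dd2 ee2 ff2
      (aa1*ff1 - bb1*ee1 + cc1*dd1) cS dS M' hα hpf2 hmx12 hN2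
    rw [← hJmdef] at h
    exact h
  have hEq : aS • (1 : Matrix (Fin 4) (Fin 4) ℝ) + bS • Jm = dS • 1 - cS • Jm := by
    rw [← hU1, ← hU2]
  have hentry : ∀ i j, (bS + cS) * Jm i j
      = (dS - aS) * (1 : Matrix (Fin 4) (Fin 4) ℝ) i j := by
    intro i j
    have h := congrFun (congrFun hEq i) j
    simp only [Matrix.add_apply, Matrix.sub_apply, Matrix.smul_apply, smul_eq_mul] at h
    linear_combination h
  have hbc : bS + cS = 0 := by
    by_contra hbc
    have hJmS : ∀ i j, Jm i j = ((dS - aS)/(bS + cS)) * (1 : Matrix (Fin 4) (Fin 4) ℝ) i j := by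
      intro i j
      have h := hentry i j
      field_simp
      linear_combination h
    have h00 := congrFun (congrFun hM3 0) 0
    rw [Matrix.mul_apply] at h00
    simp only [Fin.sum_univ_four] at h00
    rw [hJmS 0 0, hJmS 0 1, hJmS 0 2, hJmS 0 3, hJmS 1 0, hJmS 2 0, hJmS 3 0] at h00
    simp [Matrix.one_apply, Matrix.neg_apply] at h00
    nlinarith only [h00, sq_nonneg ((dS - aS)/(bS + cS)), mul_self_nonneg ((dS - aS)/(bS + cS))]
  have had : aS = dS := by
    have h := hentry 0 0
    rw [hbc, Matrix.one_apply_eq] at h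
    linear_combination h
  have hcb : cS = -bS := eq_neg_of_add_eq_zero_right hbc
  have haS0 : aS = 0 := by
    by_contra h0
    have hb0 : bS = 0 := by
      have h2 : bS * (aS + dS) = 0 := by linear_combination q2
      rw [← had] at h2
      have h3 : bS * (2 * aS) = 0 := by linear_combination h2
      rcases mul_eq_zero.mp h3 with h | h
      · exact h
      · exact absurd (by linear_combination h / 2 : aS = 0) h0
    rw [hb0] at q1
    nlinarith only [q1]
  have hbsq : bS * bS = 1 := by
    rw [haS0, hcb] at q1
    nlinarith only [q1]
  have hbS1 : bS = 1 ∨ bS = -1 := mul_self_eq_one_iff.mp hbsq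
  have hM'b : M' = bS • Jm := by rw [hU1, haS0, zero_smul, zero_add]
  have hJ'f : J' = bS • JH := by
    rw [hJ'lin, hM'b, map_smul, hJHdef]
  have hdS0 : dS = 0 := by rw [← had, haS0]
  have hJQ'f : JQ' = bS • JQ := by
    apply LinearMap.ext; intro v
    have hx := hrepr (JQ' v)
    rw [h1' v, h2' v, haS0, hcb, hdS0] at hx
    rw [← hx]
    simp only [LinearMap.smul_apply]
    rw [hJQv v]
    match_scalars <;> ring
  rcases hbS1 with hb | hb
  · left
    constructor
    · rw [hJ'f, hb, one_smul]
    · rw [hJQ'f, hb, one_smul]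
  · right
    constructor
    · rw [hJ'f, hb, neg_one_smul]
    · rw [hJQ'f, hb, neg_one_smul]
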